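/- With the hypotheses of the descent lemma (x^{k+1} minimizes M_H(·, xᵏ), F(x^{k+1}) ≤ M_H(x^{k+1}, xᵏ)), and additionally H ⪯ σI, one has for all x: F(x) ≥ F(x^{k+1}) + ⟨g_H, x−xᵏ⟩ + (1/(2σ))‖g_H‖², where g_H = H(xᵏ−x^{k+1}). In particular, taking x = xᵏ gives F(x^{k+1}) ≤ F(xᵏ) − (1/(2σ))‖g_H‖². -/

import Mathlib

open scoped RealInnerProductSpace
open Set Filter Topology

-- limit trick
lemma aux_limit (c d e : ℝ) (h : ∀ t : ℝ, 0 < t → t ≤ 1 → c ≤ e + t * d) : c ≤ e := by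
  by_contra hce
  push_neg at hce
  rcases le_or_gt d 0 with hd | hd
  · have := h 1 one_pos le_rfl; linarith
  · have ht : 0 < min 1 ((c - e) / (2 * d)) := lt_min one_pos (div_pos (by linarith) (by linarith))
    have h2 := h _ ht (min_le_left _ _)
    have : min 1 ((c - e) / (2 * d)) * d ≤ (c - e) / 2 := by
      calc min 1 ((c - e) / (2 * d)) * d ≤ ((c - e) / (2 * d)) * d :=
            mul_le_mul_of_nonneg_right (min_le_right _ _) hd.le
        _ = (c - e) / 2 := by field_simp
    linarith

-- gradient inequality for convex functions
lemma aux_grad {n : ℕ} (f : EuclideanSpace ℝ (Fin n) → ℝ)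
    (hf : ConvexOn ℝ Set.univ f) (x g : EuclideanSpace ℝ (Fin n))
    (hg : HasGradientAt f g x) (y : EuclideanSpace ℝ (Fin n)) :
    f x + ⟪g, y - x⟫ ≤ f y := by
  set v := y - x with hv
  have hc : HasDerivAt (fun t : ℝ => x + t • v) v 0 := by
    simpa using ((hasDerivAt_id (0:ℝ)).smul_const v).const_add x
  have hD : HasDerivAt (fun t : ℝ => f (x + t • v)) ⟪g, v⟫ 0 := by
    have hgx : HasFDerivAt f ((InnerProductSpace.toDual ℝ (EuclideanSpace ℝ (Fin n))) g)
        ((fun t : ℝ => x + t • v) 0) := by simpa using hg.hasFDerivAt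
    have := hgx.comp_hasDerivAt 0 hc
    simp only [InnerProductSpace.toDual_apply_apply] at this
    exact this
  rw [hasDerivAt_iff_tendsto_slope] at hD
  have hmono : 𝓝[>] (0:ℝ) ≤ 𝓝[≠] (0:ℝ) :=
    nhdsWithin_mono _ (fun t ht => ne_of_gt ht)
  have hev : ∀ᶠ t in 𝓝[>] (0:ℝ), slope (fun t : ℝ => f (x + t • v)) 0 t ≤ f y - f x := by
    filter_upwards [Ioc_mem_nhdsGT (zero_lt_one)] with t ht
    have hxy : x + t • v = (1 - t) • x + t • y := by
      rw [hv]; module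
    have hcv := hf.2 (Set.mem_univ x) (Set.mem_univ y) (by linarith [ht.2] : (0:ℝ) ≤ 1 - t)
      ht.1.le (by ring)
    rw [slope_def_field, hxy]
    simp only [zero_smul, add_zero, sub_zero]
    rw [div_le_iff₀ ht.1]
    simp only [smul_eq_mul] at hcv
    nlinarith [hcv]
  have := le_of_tendsto (hD.mono_left hmono) hev
  linarith

-- Cauchy-Schwarz for the bilinear form of H plus H ⪯ σI
lemma aux_cs {n : ℕ} (H : EuclideanSpace ℝ (Fin n) →L[ℝ] EuclideanSpace ℝ (Fin n))
    (hHsym : ∀ z w, ⟪H z, w⟫ = ⟪z, H w⟫)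
    (hHpos : ∀ z, z ≠ 0 → 0 < ⟪z, H z⟫)
    (σ : ℝ) (hσ : 0 < σ) (hHle : ∀ z, ⟪z, H z⟫ ≤ σ * ‖z‖^2)
    (u : EuclideanSpace ℝ (Fin n)) : ‖H u‖^2 ≤ σ * ⟪u, H u⟫ := by
  have hnn : ∀ z, 0 ≤ ⟪z, H z⟫ := by
    intro z
    by_cases hz : z = 0
    · simp [hz]
    · exact (hHpos z hz).le
  set v := H u with hvdef
  have hcs : ⟪u, H v⟫^2 ≤ ⟪u, H u⟫ * ⟪v, H v⟫ := by
    have h := discrim_le_zero (a := ⟪v, H v⟫) (b := 2 * ⟪u, H v⟫) (c := ⟪u, H u⟫) ?_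
    · rw [discrim] at h; nlinarith [h]
    · intro s
      have := hnn (u + s • v)
      have hexp : ⟪u + s • v, H (u + s • v)⟫
          = ⟪v, H v⟫ * (s * s) + (2 * ⟪u, H v⟫) * s + ⟪u, H u⟫ := by
        simp only [map_add, map_smul, inner_add_left, inner_add_right,
          real_inner_smul_left, real_inner_smul_right]
        have h1 : ⟪v, H u⟫ = ⟪u, H v⟫ := by
          rw [← hHsym v u, real_inner_comm]
        rw [h1]; ring
      linarith [hexp ▸ this]
  have h1 : ⟪u, H v⟫ = ‖H u‖^2 := by
    rw [← hHsym u v, hvdef, real_inner_self_eq_norm_sq]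
  have h2 : ⟪v, H v⟫ ≤ σ * ‖H u‖^2 := hHle v
  by_cases hz : ‖H u‖^2 = 0
  · rw [hz]; exact mul_nonneg hσ.le (hnn u)
  · have hpos : 0 < ‖H u‖^2 := lt_of_le_of_ne (by positivity) (Ne.symm hz)
    nlinarith [hnn u, hnn v, hcs, h1, h2]


/-- With `H ⪯ σI` in addition: for all `x`,
`F(x) ≥ F(x^{k+1}) + ⟨g_H, x−xᵏ⟩ + (1/(2σ))‖g_H‖²` where `g_H = H(xᵏ−x^{k+1})`;
in particular `F(x^{k+1}) ≤ F(xᵏ) − (1/(2σ))‖g_H‖²`. -/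
theorem imro_sufficient_decrease {n : ℕ}
    (f p : EuclideanSpace ℝ (Fin n) → ℝ) (f' : EuclideanSpace ℝ (Fin n) → EuclideanSpace ℝ (Fin n))
    (hf : ConvexOn ℝ Set.univ f) (hf' : ∀ x, HasGradientAt f (f' x) x)
    (hp : ConvexOn ℝ Set.univ p)
    (H : EuclideanSpace ℝ (Fin n) →L[ℝ] EuclideanSpace ℝ (Fin n))
    (hHsym : ∀ z w, ⟪H z, w⟫ = ⟪z, H w⟫)
    (hHpos : ∀ z, z ≠ 0 → 0 < ⟪z, H z⟫)
    (σ : ℝ) (hσ : 0 < σ) (hHle : ∀ z, ⟪z, H z⟫ ≤ σ * ‖z‖^2)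
    (xk xk1 : EuclideanSpace ℝ (Fin n)) :
    let F : EuclideanSpace ℝ (Fin n) → ℝ := fun x => f x + p x
    let M : EuclideanSpace ℝ (Fin n) → ℝ := fun x =>
      f xk + ⟪f' xk, x - xk⟫ + (1/2) * ⟪x - xk, H (x - xk)⟫ + p x
    let g : EuclideanSpace ℝ (Fin n) := H (xk - xk1)
    (∀ x, M xk1 ≤ M x) → F xk1 ≤ M xk1 →
    (∀ x, F x ≥ F xk1 + ⟪g, x - xk⟫ + (1/(2*σ)) * ‖g‖^2) ∧
    F xk1 ≤ F xk - (1/(2*σ)) * ‖g‖^2 := by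
  intro F M g hmin hFM
  set u := xk - xk1 with hu
  set w := xk1 - xk with hw
  set q : EuclideanSpace ℝ (Fin n) → ℝ := fun x => f xk + ⟪f' xk, x - xk⟫ + p x with hq
  -- first-order optimality of xk1 for M
  have key : ∀ x, q xk1 + ⟪g, x - xk1⟫ ≤ q x := by
    intro x
    set v := x - xk1 with hv
    have hsym1 : ⟪v, H w⟫ = ⟪w, H v⟫ := by rw [real_inner_comm, hHsym]
    refine aux_limit _ (⟪v, H v⟫ / 2) _ (fun t ht0 ht1 => ?_)
    set z := xk1 + t • v with hz
    have hMz := hmin z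
    have hz1 : z - xk = w + t • v := by rw [hz, hw]; module
    have e1 : ⟪f' xk, z - xk⟫ = ⟪f' xk, xk1 - xk⟫ + t * ⟪f' xk, v⟫ := by
      rw [hz1, inner_add_right, real_inner_smul_right, hw]
    have e2 : ⟪z - xk, H (z - xk)⟫ = ⟪w, H w⟫ + 2*t*⟪w, H v⟫ + t^2 * ⟪v, H v⟫ := by
      rw [hz1, map_add, map_smul]
      simp only [inner_add_left, inner_add_right, real_inner_smul_left, real_inner_smul_right]
      rw [hsym1]; ring
    have hzeq : z = (1 - t) • xk1 + t • x := by rw [hz, hv]; module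
    have e3 : p z ≤ (1 - t) * p xk1 + t * p x := by
      have := hp.2 (Set.mem_univ xk1) (Set.mem_univ x) (by linarith : (0:ℝ) ≤ 1 - t)
        ht0.le (by ring)
      rw [hzeq]
      simpa [smul_eq_mul] using this
    have hgv : ⟪g, v⟫ = -⟪w, H v⟫ := by
      have : g = -(H w) := by
        simp only [g, hu, hw, ← map_neg]
        congr 1; abel
      rw [this, inner_neg_left, hHsym]
    have e4 : ⟪f' xk, x - xk⟫ = ⟪f' xk, xk1 - xk⟫ + ⟪f' xk, v⟫ := by
      rw [show x - xk = (xk1 - xk) + v by rw [hv]; module, inner_add_right]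
    simp only [M] at hMz
    rw [e1, e2, ← hw] at hMz
    have hB : 0 ≤ t * (⟪f' xk, v⟫ + (p x - p xk1) + ⟪w, H v⟫ + t * (⟪v, H v⟫ / 2)) := by
      nlinarith [hMz, e3]
    have hB' : 0 ≤ ⟪f' xk, v⟫ + (p x - p xk1) + ⟪w, H v⟫ + t * (⟪v, H v⟫ / 2) :=
      nonneg_of_mul_nonneg_right hB ht0
    simp only [q]
    rw [e4, hgv, ← hw]
    linarith
  -- combine
  have hgrad : ∀ x, q x ≤ F x := by
    intro x
    have := aux_grad f hf xk (f' xk) (hf' xk) x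
    simp only [q, F]
    linarith
  have hww : ⟪w, H w⟫ = ⟪u, H u⟫ := by
    have : u = -w := by rw [hu, hw]; abel
    rw [this, map_neg, inner_neg_neg]
  have hFM' : F xk1 ≤ q xk1 + (1/2) * ⟪w, H w⟫ := by
    simp only [M, ← hw] at hFM
    simp only [q]
    linarith
  have hcs : ‖g‖^2 ≤ σ * ⟪u, H u⟫ := aux_cs H hHsym hHpos σ hσ hHle u
  have hnorm : (1/(2*σ)) * ‖g‖^2 ≤ (1/2) * ⟪u, H u⟫ := by
    rw [one_div, inv_mul_le_iff₀ (by linarith : (0:ℝ) < 2*σ)]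
    nlinarith [hcs]
  have main : ∀ x, F x ≥ F xk1 + ⟪g, x - xk⟫ + (1/(2*σ)) * ‖g‖^2 := by
    intro x
    have h1 := key x
    have h2 := hgrad x
    have hsplit : ⟪g, x - xk1⟫ = ⟪g, x - xk⟫ + ⟪u, H u⟫ := by
      rw [show x - xk1 = (x - xk) + u by rw [hu]; module, inner_add_right]
      congr 1
      exact hHsym u u
    rw [hsplit] at h1
    have c1 : F xk1 ≤ q xk1 + (1/2) * ⟪u, H u⟫ := by rw [← hww]; exact hFM'
    simp only [ge_iff_le]
    clear_value q u w F g
    linarith [hnorm, h1, h2, c1]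
  refine ⟨main, ?_⟩
  have := main xk
  simp only [sub_self, inner_zero_right] at this
  linarith
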